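/- Every finite abelian subgroup of PGL(2, ℂ) is either cyclic or isomorphic to the Klein four group (ℤ/2)². -/

import Mathlib

open Matrix

/-- `PGL(2, ℂ)`: the quotient of `GL(2, ℂ)` by its center. -/
def PGL2C : Type :=
  GL (Fin 2) ℂ ⧸ Subgroup.center (GL (Fin 2) ℂ)

noncomputable instance : Group PGL2C :=
  inferInstanceAs (Group (GL (Fin 2) ℂ ⧸ Subgroup.center (GL (Fin 2) ℂ)))

local notation "M2" => Matrix (Fin 2) (Fin 2) ℂ
local notation "GL2" => GL (Fin 2) ℂ

noncomputable def pmk : GL (Fin 2) ℂ →* PGL2C := QuotientGroup.mk' _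

lemma pmk_surj : Function.Surjective pmk := QuotientGroup.mk'_surjective _

lemma det_ne (A : GL2) : (A : M2).det ≠ 0 := by
  have h : ((A : M2) * (↑A⁻¹ : M2)).det = 1 := by
    rw [← Units.val_mul, mul_inv_cancel]; simp
  rw [det_mul] at h
  exact left_ne_zero_of_mul_eq_one h

lemma inv_mul_mat (A : GL2) : (↑A⁻¹ : M2) * (A : M2) = 1 := by
  rw [← Units.val_mul, inv_mul_cancel]; rfl

lemma mulVec_ne_zero (A : GL2) {v : Fin 2 → ℂ} (hv : v ≠ 0) : (A : M2).mulVec v ≠ 0 := by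
  intro h
  apply hv
  have : ((↑A⁻¹ : M2) * (A : M2)).mulVec v = 0 := by
    rw [← mulVec_mulVec, h, mulVec_zero]
  rwa [inv_mul_mat, one_mulVec] at this

noncomputable def glu1 : GL2 :=
  ⟨!![1,1;0,1], !![1,-1;0,1], by simp [Matrix.mul_fin_two, one_fin_two],
    by simp [Matrix.mul_fin_two, one_fin_two]⟩
noncomputable def glu2 : GL2 :=
  ⟨!![1,0;1,1], !![1,0;-1,1], by simp [Matrix.mul_fin_two, one_fin_two],
    by simp [Matrix.mul_fin_two, one_fin_two]⟩

lemma mem_center_iff' {U : GL2} :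
    U ∈ Subgroup.center GL2 ↔ ∃ c : ℂ, c ≠ 0 ∧ (U : M2) = c • (1 : M2) := by
  constructor
  · intro h
    have h1 := congrArg Units.val ((Subgroup.mem_center_iff.mp h) glu1)
    have h2 := congrArg Units.val ((Subgroup.mem_center_iff.mp h) glu2)
    rw [Units.val_mul, Units.val_mul] at h1 h2
    have hu1 : (glu1 : M2) = !![1,1;0,1] := rfl
    have hu2 : (glu2 : M2) = !![1,0;1,1] := rfl
    rw [hu1] at h1; rw [hu2] at h2
    have e1 := congrFun (congrFun h1 0) 0
    have e2 := congrFun (congrFun h1 0) 1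
    have e3 := congrFun (congrFun h2 0) 0
    have e4 := congrFun (congrFun h2 1) 1
    simp [Matrix.mul_apply, Fin.sum_univ_two] at e1 e2 e3 e4
    have h10 : U.val 1 0 = 0 := e1
    have h01 : U.val 0 1 = 0 := by linear_combination e3
    have h11 : U.val 1 1 = U.val 0 0 := by linear_combination e2
    refine ⟨U.val 0 0, ?_, ?_⟩
    · intro hc
      apply det_ne U
      rw [det_fin_two, h10, h11, hc]; ring
    · ext i j
      fin_cases i <;> fin_cases j <;>
        simp [Matrix.one_apply, h10, h01, h11]
  · rintro ⟨c, hc, hU⟩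
    rw [Subgroup.mem_center_iff]
    intro V
    ext
    rw [Units.val_mul, Units.val_mul, hU, smul_mul_assoc, mul_smul_comm, one_mul, mul_one]

lemma pmk_eq {A B : GL2} : pmk A = pmk B ↔ ∃ c : ℂ, c ≠ 0 ∧ (B : M2) = c • (A : M2) := by
  rw [show (pmk A = pmk B) ↔ _ from QuotientGroup.eq (s := Subgroup.center GL2),
    mem_center_iff']
  constructor
  · rintro ⟨c, hc, h⟩
    refine ⟨c, hc, ?_⟩
    have : (A : M2) * (↑(A⁻¹ * B) : M2) = (B : M2) := by
      rw [← Units.val_mul, mul_inv_cancel_left]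
    rw [h, mul_smul_comm, mul_one] at this
    exact this.symm
  · rintro ⟨c, hc, h⟩
    refine ⟨c, hc, ?_⟩
    rw [Units.val_mul, h, mul_smul_comm]
    congr 1
    rw [← Units.val_mul, inv_mul_cancel]; rfl

lemma pmk_eq_one {A : GL2} : pmk A = 1 ↔ ∃ c : ℂ, c ≠ 0 ∧ (A : M2) = c • (1 : M2) := by
  have h := pmk_eq (A := 1) (B := A)
  simp only [_root_.map_one, Units.val_one] at h
  rw [← h]
  exact ⟨fun h' => h'.symm, fun h' => h'.symm⟩

lemma comm_dichotomy {A B : GL2} (h : pmk A * pmk B = pmk B * pmk A) :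
    (A : M2) * B = B * A ∨ (A : M2) * B = -((B : M2) * A) := by
  rw [← _root_.map_mul, ← _root_.map_mul] at h
  obtain ⟨c, hc, hBA⟩ := pmk_eq.mp h
  rw [Units.val_mul, Units.val_mul] at hBA
  have hd : ((B : M2) * A).det = c ^ 2 * ((A : M2) * B).det := by
    rw [hBA, det_smul]; simp [Fintype.card_fin]
  rw [det_mul, det_mul, mul_comm] at hd
  have hdet : (A : M2).det * (B : M2).det ≠ 0 := mul_ne_zero (det_ne A) (det_ne B)
  have hc2 : c ^ 2 = 1 := by
    have h' : (c ^ 2 - 1) * ((A : M2).det * (B : M2).det) = 0 := by linear_combination -hd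
    rcases mul_eq_zero.mp h' with h'' | h''
    · linear_combination h''
    · exact absurd h'' hdet
  have hcc : c = 1 ∨ c = -1 := by
    have : (c - 1) * (c + 1) = 0 := by linear_combination hc2
    rcases mul_eq_zero.mp this with h' | h'
    · left; linear_combination h'
    · right; linear_combination h'
  rcases hcc with rfl | rfl
  · left; rw [hBA, one_smul]
  · right; rw [hBA]; simp

lemma exists_eigen (X : M2) : ∃ (μ : ℂ) (v : Fin 2 → ℂ), v ≠ 0 ∧ X.mulVec v = μ • v := by
  obtain ⟨μ, hμ⟩ : ∃ μ : ℂ, (X - μ • 1).det = 0 := by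
    obtain ⟨s, hs⟩ := IsAlgClosed.exists_pow_nat_eq (k := ℂ)
      (X.trace ^ 2 - 4 * X.det) (n := 2) (by norm_num)
    refine ⟨(X.trace + s) / 2, ?_⟩
    simp [det_fin_two, trace_fin_two, Matrix.sub_apply, Matrix.smul_apply, Matrix.one_apply] at *
    linear_combination (1/4 : ℂ) * hs
  obtain ⟨v, hv, hXv⟩ := (Matrix.exists_mulVec_eq_zero_iff).mpr hμ
  refine ⟨μ, v, hv, ?_⟩
  rw [sub_mulVec, smul_mulVec, one_mulVec, sub_eq_zero] at hXv
  exact hXv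

lemma expand {v w : Fin 2 → ℂ} (hli : LinearIndependent ℂ ![v, w]) (u : Fin 2 → ℂ) :
    ∃ a b : ℂ, u = a • v + b • w := by
  have hcard : Fintype.card (Fin 2) = Module.finrank ℂ (Fin 2 → ℂ) := by simp
  let bs := basisOfLinearIndependentOfCardEqFinrank hli hcard
  have hb : ∀ i, bs i = ![v, w] i := fun i => by
    simp [bs, coe_basisOfLinearIndependentOfCardEqFinrank]
  have h := bs.sum_repr u
  rw [Fin.sum_univ_two, hb 0, hb 1] at h
  exact ⟨bs.repr u 0, bs.repr u 1, h.symm⟩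

lemma coeff_unique {v w : Fin 2 → ℂ} (hli : LinearIndependent ℂ ![v, w]) {a b a' b' : ℂ}
    (h : a • v + b • w = a' • v + b' • w) : a = a' ∧ b = b' := by
  have h0 := Fintype.linearIndependent_iff.mp hli ![a - a', b - b'] ?_
  · constructor
    · have := h0 0; simpa [sub_eq_zero] using this
    · have := h0 1; simpa [sub_eq_zero] using this
  · rw [Fin.sum_univ_two]
    simp only [Matrix.cons_val_zero, Matrix.cons_val_one, Matrix.head_cons]
    rw [sub_smul, sub_smul]
    rw [← sub_eq_zero] at h
    rw [← h]; abel

lemma eq_of_mulVec_eq {X Y : M2} {v w : Fin 2 → ℂ} (hli : LinearIndependent ℂ ![v, w])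
    (hv : X.mulVec v = Y.mulVec v) (hw : X.mulVec w = Y.mulVec w) : X = Y := by
  have hall : ∀ u, X.mulVec u = Y.mulVec u := by
    intro u
    obtain ⟨a, b, rfl⟩ := expand hli u
    rw [mulVec_add, mulVec_add, mulVec_smul, mulVec_smul, mulVec_smul, mulVec_smul, hv, hw]
  ext i j
  have := congrFun (hall (Pi.single j 1)) i
  simpa [mulVec_single] using this

lemma sq_of_trace_zero {X : M2} (h : X.trace = 0) : X * X = (-X.det) • 1 := by
  rw [trace_fin_two] at h
  have h11 : X 1 1 = -X 0 0 := by linear_combination h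
  ext i j
  fin_cases i <;> fin_cases j <;>
    simp [Matrix.mul_apply, Fin.sum_univ_two, det_fin_two, Matrix.one_apply, h11] <;> ring

lemma det_sub_smul (X : M2) (μ : ℂ) :
    (X - μ • 1).det = X.det - μ * X.trace + μ ^ 2 := by
  simp [det_fin_two, trace_fin_two, Matrix.sub_apply, Matrix.smul_apply, Matrix.one_apply]
  ring

lemma pow_scalar_add_nil {N : M2} (hN : N * N = 0) (μ : ℂ) :
    ∀ n : ℕ, (μ • 1 + N) ^ (n + 1) = (μ ^ (n + 1)) • (1 : M2) + (((n : ℂ) + 1) * μ ^ n) • N := by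
  intro n
  induction n with
  | zero => simp
  | succ k ih =>
    rw [pow_succ, ih, add_mul, smul_mul_assoc, smul_mul_assoc, mul_add, mul_add,
      mul_smul_comm, mul_smul_comm, one_mul, mul_one, hN]
    simp only [smul_zero, add_zero, one_mul, mul_one]
    push_cast
    match_scalars <;> ring

lemma smul_vec_cancel {v : Fin 2 → ℂ} (hv : v ≠ 0) {a b : ℂ} (h : a • v = b • v) : a = b := by
  by_contra hab
  apply hv
  have : (a - b) • v = 0 := by rw [sub_smul, h, sub_self]
  rcases smul_eq_zero.mp this with h' | h'
  · exact absurd (sub_eq_zero.mp h') hab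
  · exact h'


lemma zero_det2 : (0 : M2).det = 0 := by simp [det_fin_two]

lemma scalar_coef_ne {A : GL2} {c : ℂ} (h : (A : M2) = c • (1 : M2)) : c ≠ 0 := by
  intro h0
  apply det_ne A
  rw [h, h0, zero_smul, zero_det2]

/-- Every finite abelian subgroup of `PGL(2, ℂ)` is either cyclic or
isomorphic to the Klein four group `(ℤ/2)²`. -/
theorem stmt4 (G : Subgroup PGL2C) [Finite G]
    (habel : ∀ a b : G, a * b = b * a) :
    IsCyclic G ∨ Nonempty (G ≃* Multiplicative (ZMod 2 × ZMod 2)) := by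
  classical
  have hpcomm : ∀ {x y : PGL2C}, x ∈ G → y ∈ G → x * y = y * x := by
    intro x y hx hy
    exact congrArg Subtype.val (habel ⟨x, hx⟩ ⟨y, hy⟩)
  by_cases hanti : ∃ A B : GL2, pmk A ∈ G ∧ pmk B ∈ G ∧
      (A : M2) * (B : M2) = -((B : M2) * (A : M2))
  · -- Klein four case
    right
    obtain ⟨A, B, hAG, hBG, hAB⟩ := hanti
    have hBA : (B : M2) * (A : M2) = -((A : M2) * (B : M2)) := by
      rw [hAB, neg_neg]
    have htrA : (A : M2).trace = 0 := by
      have e : ((A : M2) * (B : M2)) * (↑B⁻¹ : M2) = (A : M2) := by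
        rw [mul_assoc, ← Units.val_mul, mul_inv_cancel]; simp
      have e2 : (A : M2).trace = -((A : M2).trace) := by
        calc (A : M2).trace = (((A : M2) * (B : M2)) * (↑B⁻¹ : M2)).trace := by rw [e]
        _ = ((-((B : M2) * (A : M2))) * (↑B⁻¹ : M2)).trace := by rw [hAB]
        _ = -((((B : M2) * (A : M2)) * (↑B⁻¹ : M2)).trace) := by rw [neg_mul, trace_neg]
        _ = -(((↑B⁻¹ : M2) * ((B : M2) * (A : M2))).trace) := by rw [trace_mul_comm]
        _ = -((A : M2).trace) := by rw [← mul_assoc, inv_mul_mat, one_mul]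
      linear_combination (1/2 : ℂ) * e2
    have htrB : (B : M2).trace = 0 := by
      have e : ((B : M2) * (A : M2)) * (↑A⁻¹ : M2) = (B : M2) := by
        rw [mul_assoc, ← Units.val_mul, mul_inv_cancel]; simp
      have e2 : (B : M2).trace = -((B : M2).trace) := by
        calc (B : M2).trace = (((B : M2) * (A : M2)) * (↑A⁻¹ : M2)).trace := by rw [e]
        _ = ((-((A : M2) * (B : M2))) * (↑A⁻¹ : M2)).trace := by rw [hBA]
        _ = -((((A : M2) * (B : M2)) * (↑A⁻¹ : M2)).trace) := by rw [neg_mul, trace_neg]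
        _ = -(((↑A⁻¹ : M2) * ((A : M2) * (B : M2))).trace) := by rw [trace_mul_comm]
        _ = -((B : M2).trace) := by rw [← mul_assoc, inv_mul_mat, one_mul]
      linear_combination (1/2 : ℂ) * e2
    have hA2 : (A : M2) * (A : M2) = (-(A : M2).det) • 1 := sq_of_trace_zero htrA
    have hB2 : (B : M2) * (B : M2) = (-(B : M2).det) • 1 := sq_of_trace_zero htrB
    have hdA : -(A : M2).det ≠ 0 := neg_ne_zero.mpr (det_ne A)
    have hdB : -(B : M2).det ≠ 0 := neg_ne_zero.mpr (det_ne B)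
    have ha2 : pmk A * pmk A = 1 := by
      rw [← _root_.map_mul]
      exact pmk_eq_one.mpr ⟨-(A : M2).det, hdA, by rw [Units.val_mul, hA2]⟩
    have hb2 : pmk B * pmk B = 1 := by
      rw [← _root_.map_mul]
      exact pmk_eq_one.mpr ⟨-(B : M2).det, hdB, by rw [Units.val_mul, hB2]⟩
    have hABsq : ((A : M2) * (B : M2)) * ((A : M2) * (B : M2))
        = (-((-(A : M2).det) * (-(B : M2).det))) • 1 := by
      have e1 : ((A : M2) * (B : M2)) * ((A : M2) * (B : M2))
          = (A : M2) * ((B : M2) * (A : M2)) * (B : M2) := by noncomm_ring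
      rw [e1, hBA, mul_neg, neg_mul]
      have e2 : (A : M2) * ((A : M2) * (B : M2)) * (B : M2)
          = ((A : M2) * (A : M2)) * ((B : M2) * (B : M2)) := by noncomm_ring
      rw [e2, hA2, hB2, smul_mul_smul_comm, mul_one, ← neg_smul]
    have hab2 : (pmk A * pmk B) * (pmk A * pmk B) = 1 := by
      rw [← _root_.map_mul, ← _root_.map_mul]
      exact pmk_eq_one.mpr ⟨-((-(A : M2).det) * (-(B : M2).det)),
        neg_ne_zero.mpr (mul_ne_zero hdA hdB),
        by rw [Units.val_mul, Units.val_mul, hABsq]⟩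
    obtain ⟨δ, v, hv, hAv⟩ := exists_eigen (A : M2)
    have hδ : δ ≠ 0 := fun h => mulVec_ne_zero A hv (by rw [hAv, h, zero_smul])
    set w : Fin 2 → ℂ := (B : M2).mulVec v with hwdef
    have hw0 : w ≠ 0 := mulVec_ne_zero B hv
    have hAw : (A : M2).mulVec w = (-δ) • w := by
      rw [hwdef, mulVec_mulVec, hAB, neg_mulVec, ← mulVec_mulVec, hAv, mulVec_smul, ← neg_smul]
    have hli : LinearIndependent ℂ ![v, w] := by
      apply linearIndependent_fin2.mpr
      refine ⟨hw0, fun x hx => ?_⟩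
      simp only [Matrix.cons_val_one, Matrix.head_cons, Matrix.cons_val_zero] at hx
      have e1 : (A : M2).mulVec v = (-δ) • v := by
        rw [← hx, mulVec_smul, hAw, smul_smul, smul_smul, mul_comm]
      have e2 : δ = -δ := smul_vec_cancel hv (by rw [← hAv, e1])
      exact hδ (by linear_combination (1/2 : ℂ) * e2)
    have hBw : (B : M2).mulVec w = (-(B : M2).det) • v := by
      rw [hwdef, mulVec_mulVec, hB2, smul_mulVec, one_mulVec]
    have hclass : ∀ x : PGL2C, x ∈ G →
        x = 1 ∨ x = pmk A ∨ x = pmk B ∨ x = pmk A * pmk B := by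
      intro x hx
      obtain ⟨C, rfl⟩ := pmk_surj x
      have hCv_ne : (C : M2).mulVec v ≠ 0 := mulVec_ne_zero C hv
      obtain ⟨α, γ, hCv⟩ := expand hli ((C : M2).mulVec v)
      have hcA := comm_dichotomy (hpcomm hx hAG)
      have hcB := comm_dichotomy (hpcomm hx hBG)
      rcases hcA with hA' | hA'
      · have h1 : (A : M2).mulVec ((C : M2).mulVec v) = δ • ((C : M2).mulVec v) := by
          rw [mulVec_mulVec, ← hA', ← mulVec_mulVec, hAv, mulVec_smul]
        rw [hCv, mulVec_add, mulVec_smul, mulVec_smul, hAv, hAw, smul_add,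
          smul_smul, smul_smul, smul_smul, smul_smul] at h1
        obtain ⟨h1a, h1b⟩ := coeff_unique hli h1
        have hγ : γ = 0 := by
          have h2 : (2 * δ) * γ = 0 := by linear_combination -h1b
          rcases mul_eq_zero.mp h2 with h' | h'
          · exact absurd h' (mul_ne_zero two_ne_zero hδ)
          · exact h'
        have hCvα : (C : M2).mulVec v = α • v := by rw [hCv, hγ, zero_smul, add_zero]
        have hα : α ≠ 0 := fun h0 => hCv_ne (by rw [hCvα, h0, zero_smul])
        rcases hcB with hB' | hB'
        · left
          have hCw : (C : M2).mulVec w = α • w := by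
            rw [hwdef, mulVec_mulVec, hB', ← mulVec_mulVec, hCvα, mulVec_smul]
          have hCeq : (C : M2) = α • (1 : M2) :=
            eq_of_mulVec_eq hli (by rw [hCvα, smul_mulVec, one_mulVec])
              (by rw [hCw, smul_mulVec, one_mulVec])
          exact pmk_eq_one.mpr ⟨α, hα, hCeq⟩
        · right; left
          have hCw : (C : M2).mulVec w = (-α) • w := by
            rw [hwdef, mulVec_mulVec, hB', neg_mulVec, ← mulVec_mulVec, hCvα,
              mulVec_smul, ← neg_smul]
          have hCeq : (C : M2) = (α * δ⁻¹) • (A : M2) := by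
            apply eq_of_mulVec_eq hli
            · rw [hCvα, smul_mulVec, hAv, smul_smul]
              congr 1
              field_simp
            · rw [hCw, smul_mulVec, hAw, smul_smul]
              congr 1
              field_simp
          exact (pmk_eq.mpr ⟨α * δ⁻¹, mul_ne_zero hα (inv_ne_zero hδ), hCeq⟩).symm
      · have h1 : (A : M2).mulVec ((C : M2).mulVec v) = (-δ) • ((C : M2).mulVec v) := by
          have e : (A : M2) * (C : M2) = -((C : M2) * (A : M2)) := by rw [hA', neg_neg]
          rw [mulVec_mulVec, e, neg_mulVec, ← mulVec_mulVec, hAv, mulVec_smul, ← neg_smul]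
        rw [hCv, mulVec_add, mulVec_smul, mulVec_smul, hAv, hAw, smul_add,
          smul_smul, smul_smul, smul_smul, smul_smul] at h1
        obtain ⟨h1a, h1b⟩ := coeff_unique hli h1
        have hα0 : α = 0 := by
          have h2 : (2 * δ) * α = 0 := by linear_combination h1a
          rcases mul_eq_zero.mp h2 with h' | h'
          · exact absurd h' (mul_ne_zero two_ne_zero hδ)
          · exact h'
        have hCvγ : (C : M2).mulVec v = γ • w := by rw [hCv, hα0, zero_smul, zero_add]
        have hγ : γ ≠ 0 := fun h0 => hCv_ne (by rw [hCvγ, h0, zero_smul])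
        rcases hcB with hB' | hB'
        · right; right; left
          have hCw : (C : M2).mulVec w = (γ * (-(B : M2).det)) • v := by
            rw [hwdef, mulVec_mulVec, hB', ← mulVec_mulVec, hCvγ, mulVec_smul, hBw, smul_smul]
          have hCeq : (C : M2) = γ • (B : M2) := by
            apply eq_of_mulVec_eq hli
            · rw [hCvγ, smul_mulVec, ← hwdef]
            · rw [hCw, smul_mulVec, hBw, smul_smul]
          exact (pmk_eq.mpr ⟨γ, hγ, hCeq⟩).symm
        · right; right; right
          have hCw : (C : M2).mulVec w = (-(γ * (-(B : M2).det))) • v := by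
            rw [hwdef, mulVec_mulVec, hB', neg_mulVec, ← mulVec_mulVec, hCvγ,
              mulVec_smul, hBw, smul_smul, ← neg_smul]
          have hABv : ((A : M2) * (B : M2)).mulVec v = (-δ) • w := by
            rw [← mulVec_mulVec, ← hwdef, hAw]
          have hABw : ((A : M2) * (B : M2)).mulVec w = ((-(B : M2).det) * δ) • v := by
            rw [← mulVec_mulVec, hBw, mulVec_smul, hAv, smul_smul]
          have hCeq : (C : M2) = (-(γ * δ⁻¹)) • ((A : M2) * (B : M2)) := by
            apply eq_of_mulVec_eq hli
            · rw [hCvγ, smul_mulVec, hABv, smul_smul]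
              congr 1
              field_simp
            · rw [hCw, smul_mulVec, hABw, smul_smul]
              congr 1
              field_simp
          have hfin : pmk (A * B) = pmk C :=
            pmk_eq (A := A * B).mpr ⟨-(γ * δ⁻¹),
              neg_ne_zero.mpr (mul_ne_zero hγ (inv_ne_zero hδ)),
              by rw [Units.val_mul]; exact hCeq⟩
          rw [_root_.map_mul] at hfin
          exact hfin.symm
    -- distinctness
    have hAns : ∀ c : ℂ, (A : M2) ≠ c • (1 : M2) := by
      intro c hc
      have hc0 : c ≠ 0 := scalar_coef_ne hc
      rw [hc, smul_mul_assoc, one_mul, mul_smul_comm, mul_one] at hAB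
      have h2 : (B : M2) = 0 := by
        have h3 : (c + c) • (B : M2) = 0 := by
          rw [add_smul]
          nth_rewrite 1 [hAB]
          rw [neg_add_cancel]
        rcases smul_eq_zero.mp h3 with h' | h'
        · exact absurd h' (by intro h''; exact hc0 (by linear_combination (1/2 : ℂ) * h''))
        · exact h'
      apply det_ne B
      rw [h2, zero_det2]
    have hBns : ∀ c : ℂ, (B : M2) ≠ c • (1 : M2) := by
      intro c hc
      have hc0 : c ≠ 0 := scalar_coef_ne hc
      rw [hc, smul_mul_assoc, one_mul, mul_smul_comm, mul_one] at hBA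
      have h2 : (A : M2) = 0 := by
        have h3 : (c + c) • (A : M2) = 0 := by
          rw [add_smul]
          nth_rewrite 1 [hBA]
          rw [neg_add_cancel]
        rcases smul_eq_zero.mp h3 with h' | h'
        · exact absurd h' (by intro h''; exact hc0 (by linear_combination (1/2 : ℂ) * h''))
        · exact h'
      apply det_ne A
      rw [h2, zero_det2]
    have ha1 : pmk A ≠ 1 := fun h => by
      obtain ⟨c, hc, h'⟩ := pmk_eq_one.mp h
      exact hAns c h'
    have hb1 : pmk B ≠ 1 := fun h => by
      obtain ⟨c, hc, h'⟩ := pmk_eq_one.mp h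
      exact hBns c h'
    have hab1 : pmk A * pmk B ≠ 1 := by
      rw [← _root_.map_mul]
      intro h
      obtain ⟨c, hc, h'⟩ := pmk_eq_one.mp h
      rw [Units.val_mul] at h'
      have t1 : ((A : M2) * (B : M2)).trace = c * 2 := by
        rw [h', trace_smul, trace_one]
        simp
      have t2 : ((B : M2) * (A : M2)).trace = -(c * 2) := by
        rw [hBA, trace_neg, t1]
      rw [trace_mul_comm] at t1
      rw [t1] at t2
      exact hc (by linear_combination (1/4 : ℂ) * t2)
    have hne_ab : pmk A ≠ pmk B := by
      intro h
      obtain ⟨c, hc, h'⟩ := pmk_eq.mp h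
      rw [h', mul_smul_comm, smul_mul_assoc] at hAB
      have h2 : (A : M2) * (A : M2) = 0 := by
        have h3 : (c + c) • ((A : M2) * (A : M2)) = 0 := by
          rw [add_smul]
          nth_rewrite 1 [hAB]
          rw [neg_add_cancel]
        rcases smul_eq_zero.mp h3 with h' | h'
        · exact absurd h' (by intro h''; exact hc (by linear_combination (1/2 : ℂ) * h''))
        · exact h'
      apply det_ne A
      have := congrArg Matrix.det h2
      rw [det_mul, zero_det2] at this
      rcases mul_eq_zero.mp this with h' | h' <;> exact h'
    -- the set of elements
    have hset : (G : Set PGL2C) = {1, pmk A, pmk B, pmk A * pmk B} := by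
      ext x
      simp only [Set.mem_insert_iff, Set.mem_singleton_iff, SetLike.mem_coe]
      constructor
      · intro hx
        exact hclass x hx
      · rintro (rfl | rfl | rfl | rfl)
        · exact one_mem G
        · exact hAG
        · exact hBG
        · exact mul_mem hAG hBG
    have hcard : Nat.card G = 4 := by
      have h1 : Nat.card G = ((G : Set PGL2C)).ncard := by
        rw [← Nat.card_coe_set_eq]
        rfl
      rw [h1, hset]
      rw [Set.ncard_insert_of_notMem (by
        simp only [Set.mem_insert_iff, Set.mem_singleton_iff]
        push_neg
        exact ⟨Ne.symm ha1, Ne.symm hb1, Ne.symm hab1⟩)]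
      rw [Set.ncard_insert_of_notMem (by
        simp only [Set.mem_insert_iff, Set.mem_singleton_iff]
        push_neg
        exact ⟨hne_ab, fun h => hb1 (mul_eq_left.mp h.symm)⟩)]
      rw [Set.ncard_pair (fun h => ha1 (mul_eq_right.mp h.symm))]
    have hsq : ∀ g : G, g ^ 2 = 1 := by
      intro g
      apply Subtype.ext
      have hcoe : ((g ^ 2 : G) : PGL2C) = (g : PGL2C) ^ 2 := by push_cast; ring
      rw [hcoe]
      show (g : PGL2C) ^ 2 = 1
      rcases hclass (g : PGL2C) g.2 with h | h | h | h <;> rw [h, pow_two]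
      · rw [one_mul]
      · exact ha2
      · exact hb2
      · exact hab2
    have hexp : Monoid.exponent G = 2 := by
      have hdvd : Monoid.exponent G ∣ 2 := Monoid.exponent_dvd_of_forall_pow_eq_one hsq
      rcases (Nat.prime_two.eq_one_or_self_of_dvd _ hdvd) with h | h
      · exfalso
        have hg : (⟨pmk A, hAG⟩ : G) = 1 := by
          have hp := Monoid.pow_exponent_eq_one (⟨pmk A, hAG⟩ : G)
          rwa [h, pow_one] at hp
        exact ha1 (congrArg Subtype.val hg)
      · exact h
    haveI : IsKleinFour G := ⟨hcard, hexp⟩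
    exact IsKleinFour.nonempty_mulEquiv
  · -- cyclic case
    left
    have hcomm : ∀ A B : GL2, pmk A ∈ G → pmk B ∈ G → (A : M2) * B = (B : M2) * A := by
      intro A B hA hB
      rcases comm_dichotomy (hpcomm hA hB) with h | h
      · exact h
      · exact absurd ⟨A, B, hA, hB, h⟩ hanti
    by_cases htriv : ∀ x : G, x = 1
    · haveI : Subsingleton G := ⟨fun a b => (htriv a).trans (htriv b).symm⟩
      infer_instance
    push_neg at htriv
    obtain ⟨x0, hx0⟩ := htriv
    obtain ⟨A0, hA0⟩ := pmk_surj (x0 : PGL2C)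
    have hA0G : pmk A0 ∈ G := hA0 ▸ x0.2
    have hA0ns : ∀ c : ℂ, (A0 : M2) ≠ c • (1 : M2) := by
      intro c hcA
      have hc : c ≠ 0 := scalar_coef_ne hcA
      apply hx0
      apply Subtype.ext
      show (x0 : PGL2C) = 1
      rw [← hA0]
      exact pmk_eq_one.mpr ⟨c, hc, hcA⟩
    obtain ⟨δ, v, hv, hAv⟩ := exists_eigen (A0 : M2)
    have hδ : δ ≠ 0 := by
      intro h
      exact mulVec_ne_zero A0 hv (by rw [hAv, h, zero_smul])
    have hkey : ∀ C : GL2, pmk C ∈ G → ∃ μ : ℂ, μ ≠ 0 ∧ (C : M2).mulVec v = μ • v := by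
      intro C hC
      by_cases h : ∃ μ : ℂ, (C : M2).mulVec v = μ • v
      · obtain ⟨μ, hμ⟩ := h
        refine ⟨μ, ?_, hμ⟩
        intro h0
        exact mulVec_ne_zero C hv (by rw [hμ, h0, zero_smul])
      · push_neg at h
        exfalso
        set w := (C : M2).mulVec v with hw
        have hw0 : w ≠ 0 := mulVec_ne_zero C hv
        have hli : LinearIndependent ℂ ![v, w] := by
          apply linearIndependent_fin2.mpr
          refine ⟨hw0, fun a ha => ?_⟩
          simp only [Matrix.cons_val_one, Matrix.head_cons, Matrix.cons_val_zero] at ha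
          have ha0 : a ≠ 0 := by
            intro h0; rw [h0, zero_smul] at ha; exact hv ha.symm
          exact h a⁻¹ (by rw [← ha, smul_smul, inv_mul_cancel₀ ha0, one_smul])
        have hAw : (A0 : M2).mulVec w = δ • w := by
          rw [hw, mulVec_mulVec, hcomm A0 C hA0G hC, ← mulVec_mulVec, hAv, mulVec_smul]
        have : (A0 : M2) = δ • (1 : M2) :=
          eq_of_mulVec_eq hli (by rw [hAv, smul_mulVec, one_mulVec])
            (by rw [hAw, smul_mulVec, one_mulVec])
        exact hA0ns δ this
    choose lift hlift using fun g : G => pmk_surj (g : PGL2C)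
    have hliftG : ∀ g : G, pmk (lift g) ∈ G := fun g => by rw [hlift g]; exact g.2
    choose μf hμf0 hμfv using fun g : G => hkey (lift g) (hliftG g)
    have hdetne : ∀ g : G, ((lift g : M2)).det ≠ 0 := fun g => det_ne (lift g)
    set φ0 : G → ℂ := fun g => μf g ^ 2 / ((lift g : M2)).det with hφ0def
    have hφ0ne : ∀ g : G, φ0 g ≠ 0 := fun g =>
      div_ne_zero (pow_ne_zero 2 (hμf0 g)) (hdetne g)
    have hφ0mul : ∀ g h : G, φ0 (g * h) = φ0 g * φ0 h := by
      intro g h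
      have hmul : pmk (lift (g * h)) = pmk (lift g * lift h) := by
        rw [_root_.map_mul, hlift, hlift, hlift]
        exact congrArg Subtype.val rfl
      obtain ⟨c, hc, hcc⟩ := pmk_eq.mp hmul
      rw [Units.val_mul] at hcc
      have h1 : μf g * μf h = c * μf (g * h) := by
        apply smul_vec_cancel hv
        have e1 : ((lift g : M2) * (lift h : M2)).mulVec v = (μf g * μf h) • v := by
          rw [← mulVec_mulVec, hμfv, mulVec_smul, hμfv, smul_smul,
            mul_comm (μf h) (μf g)]
        rw [hcc, smul_mulVec, hμfv, smul_smul] at e1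
        rw [← e1]
      have h2 : (lift g : M2).det * (lift h : M2).det = c ^ 2 * ((lift (g * h) : M2)).det := by
        have := congrArg Matrix.det hcc
        rw [det_mul, det_smul] at this
        simpa [Fintype.card_fin] using this
      have h1sq : (μf g * μf h) ^ 2 = c ^ 2 * μf (g * h) ^ 2 := by
        rw [h1]; ring
      have d1 : ((lift g : M2)).det ≠ 0 := hdetne g
      have d2 : ((lift h : M2)).det ≠ 0 := hdetne h
      have d3 : ((lift (g * h) : M2)).det ≠ 0 := hdetne (g * h)
      rw [hφ0def]
      field_simp [d1, d2, d3]
      linear_combination (μf (g*h))^2 * h2 - ((lift (g*h) : M2)).det * h1sq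
    set φ : G →* ℂˣ :=
      MonoidHom.mk' (fun g => Units.mk0 (φ0 g) (hφ0ne g))
        (fun g h => Units.ext (by simp [hφ0mul g h])) with hφdef
    have hinj : Function.Injective φ := by
      rw [injective_iff_map_eq_one]
      intro g hg
      have hφ1 : φ0 g = 1 := by
        have := congrArg Units.val hg
        simpa [hφdef] using this
      have hdet : ((lift g : M2)).det = μf g ^ 2 := by
        rw [hφ0def, div_eq_one_iff_eq (hdetne g)] at hφ1
        exact hφ1.symm
      set B : GL2 := lift g with hBdef
      set μ : ℂ := μf g with hμdef
      have hμ : μ ≠ 0 := hμf0 g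
      have hroot : ((B : M2) - μ • 1).det = 0 := by
        have hz : ((B : M2) - μ • 1).mulVec v = 0 := by
          rw [sub_mulVec, hμfv, smul_mulVec, one_mulVec, sub_self]
        exact (Matrix.exists_mulVec_eq_zero_iff).mp ⟨v, hv, hz⟩
      rw [det_sub_smul, hdet] at hroot
      have htr : (B : M2).trace = 2 * μ := by
        have h2 : μ * (2 * μ - (B : M2).trace) = 0 := by linear_combination hroot
        rcases mul_eq_zero.mp h2 with h' | h'
        · exact absurd h' hμ
        · linear_combination -h'
      set N : M2 := (B : M2) - μ • 1 with hNdef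
      have hNdet : N.det = 0 := by
        rw [hNdef, det_sub_smul, hdet, htr]; ring
      have hNtr : N.trace = 0 := by
        rw [hNdef, trace_sub, trace_smul, trace_one, htr]
        simp; ring
      have hNN : N * N = 0 := by
        have := sq_of_trace_zero hNtr
        rw [hNdet] at this
        simpa using this
      have hBN : (B : M2) = μ • 1 + N := by rw [hNdef]; abel
      -- finite order
      obtain ⟨m, hm⟩ : ∃ m : ℕ, Nat.card G = m + 1 :=
        ⟨Nat.card G - 1, (Nat.succ_pred_eq_of_pos Nat.card_pos).symm⟩
      have hgn : (g : PGL2C) ^ (m + 1) = 1 := by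
        have h1 : g ^ (m + 1) = 1 := by rw [← hm]; exact pow_card_eq_one'
        have := congrArg Subtype.val h1
        simpa using this
      have hpk : pmk (B ^ (m + 1)) = 1 := by
        rw [map_pow, hBdef, hlift g, hgn]
      obtain ⟨c, hc, hcn⟩ := pmk_eq_one.mp hpk
      rw [Units.val_pow_eq_pow_val, hBN, pow_scalar_add_nil hNN μ m] at hcn
      have hNs : (((m : ℂ) + 1) * μ ^ m) • N = (c - μ ^ (m + 1)) • (1 : M2) := by
        rw [sub_smul, ← hcn]; abel
      have ht : ((m : ℂ) + 1) * μ ^ m ≠ 0 :=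
        mul_ne_zero (Nat.cast_add_one_ne_zero m) (pow_ne_zero m hμ)
      set s : ℂ := (((m : ℂ) + 1) * μ ^ m)⁻¹ * (c - μ ^ (m + 1)) with hsdef
      have hNs' : N = s • (1 : M2) := by
        rw [hsdef, mul_smul, ← hNs, smul_smul, inv_mul_cancel₀ ht, one_smul]
      have hs0 : s = 0 := by
        have h00 : (N * N) 0 0 = 0 := by rw [hNN]; rfl
        rw [hNs', smul_mul_smul_comm, one_mul] at h00
        have : s * s = 0 := by simpa [Matrix.smul_apply, Matrix.one_apply] using h00
        exact pow_eq_zero_iff (n := 2) (by norm_num) |>.mp (by rw [sq]; exact this)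
      have hB1 : (B : M2) = μ • 1 := by
        rw [hBN, hNs', hs0, zero_smul, add_zero]
      have : pmk B = 1 := pmk_eq_one.mpr ⟨μ, hμ, hB1⟩
      rw [hBdef, hlift g] at this
      exact Subtype.ext this
    haveI hfr : Finite φ.range := Set.Finite.to_subtype (Set.finite_range ⇑φ)
    have e : G ≃* φ.range := MonoidHom.ofInjective hinj
    exact isCyclic_of_surjective e.symm e.symm.surjective
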